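/- Let X_1, X_2, ... be i.i.d. ±1-valued with P[X_i = 1] = p, and S_n = X_1 + ... + X_n. For any reals p̲ < p̄, the limit lim_{n→∞} -(1/n) log P[2p̲ - 1 ≤ S_n/n ≤ 2p̄ - 1] equals D_KL(p̲ || p) if p < p̲, equals 0 if p̲ ≤ p ≤ p̄, and equals D_KL(p̄ || p) if p̄ < p, assuming 0 ≤ p̲ < p̄ ≤ 1. -/

import Mathlib

open MeasureTheory ProbabilityTheory Filter

/-- Bernoulli Kullback-Leibler divergence `D_KL(x || p)`. -/
noncomputable def klBer (x p : ℝ) : ℝ :=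
  x * Real.log (x / p) + (1 - x) * Real.log ((1 - x) / (1 - p))


noncomputable def klF (p : ℝ) : ℝ → ℝ :=
  fun x => x * Real.log x + (1-x) * Real.log (1-x) - x * Real.log p - (1-x) * Real.log (1-p)

lemma klF_continuous (p : ℝ) : Continuous (klF p) := by
  unfold klF
  have h1 : Continuous fun x : ℝ => x * Real.log x := Real.continuous_mul_log
  have h2 : Continuous fun x : ℝ => (1-x) * Real.log (1-x) :=
    h1.comp (continuous_const.sub continuous_id)
  fun_prop (disch := skip)

lemma klBer_eq_klF (p : ℝ) (hp0 : 0 < p) (hp1 : p < 1) {x : ℝ} (hx0 : 0 ≤ x) (hx1 : x ≤ 1) :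
    klBer x p = klF p x := by
  unfold klBer klF
  rcases eq_or_lt_of_le hx0 with h0 | h0
  · simp [← h0, Real.log_div one_ne_zero (by linarith : (1:ℝ) - p ≠ 0)]
  rcases eq_or_lt_of_le hx1 with h1 | h1
  · simp [h1, Real.log_div (by linarith : x ≠ 0) (ne_of_gt hp0)]
  rw [Real.log_div (ne_of_gt h0) (ne_of_gt hp0),
    Real.log_div (by linarith : (1:ℝ) - x ≠ 0) (by linarith : (1:ℝ) - p ≠ 0)]
  ring

lemma klF_hasDeriv (p : ℝ) {x : ℝ} (h0 : 0 < x) (h1 : x < 1) :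
    HasDerivAt (klF p) (Real.log x - Real.log (1-x) - Real.log p + Real.log (1-p)) x := by
  unfold klF
  have d1 : HasDerivAt (fun x : ℝ => x * Real.log x) (Real.log x + 1) x :=
    Real.hasDerivAt_mul_log (ne_of_gt h0)
  have d2 : HasDerivAt (fun x : ℝ => (1-x) * Real.log (1-x))
      (-(Real.log (1-x) + 1)) x := by
    have base : HasDerivAt (fun y : ℝ => y * Real.log y) (Real.log (1-x) + 1) (1-x) :=
      Real.hasDerivAt_mul_log (by linarith : (1:ℝ) - x ≠ 0)
    have inner : HasDerivAt (fun x : ℝ => 1 - x) (-1) x := by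
      simpa using (hasDerivAt_id x).const_sub 1
    have := base.comp x inner
    simpa [mul_comm, Function.comp_def] using this
  have d3 : HasDerivAt (fun x : ℝ => x * Real.log p) (Real.log p) x := by
    simpa using (hasDerivAt_id x).mul_const (Real.log p)
  have d4 : HasDerivAt (fun x : ℝ => (1-x) * Real.log (1-p)) (-Real.log (1-p)) x := by
    have inner : HasDerivAt (fun x : ℝ => 1 - x) (-1) x := by
      simpa using (hasDerivAt_id x).const_sub 1
    simpa using inner.mul_const (Real.log (1-p))
  have := ((d1.add d2).sub d3).sub d4
  exact this.congr_deriv (by ring)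

lemma klF_monoOn (p : ℝ) (hp0 : 0 < p) (hp1 : p < 1) : MonotoneOn (klF p) (Set.Icc p 1) := by
  apply monotoneOn_of_deriv_nonneg (convex_Icc p 1) (klF_continuous p).continuousOn
  · intro x hx
    rw [interior_Icc] at hx
    exact (klF_hasDeriv p (lt_trans hp0 hx.1) hx.2).differentiableAt.differentiableWithinAt
  · intro x hx
    rw [interior_Icc] at hx
    obtain ⟨ha, hb⟩ := hx
    rw [(klF_hasDeriv p (lt_trans hp0 ha) hb).deriv]
    have l1 : Real.log p ≤ Real.log x := Real.log_le_log hp0 (le_of_lt ha)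
    have l2 : Real.log (1-x) ≤ Real.log (1-p) :=
      Real.log_le_log (by linarith) (by linarith)
    linarith

lemma klF_antiOn (p : ℝ) (hp0 : 0 < p) (hp1 : p < 1) : AntitoneOn (klF p) (Set.Icc 0 p) := by
  apply antitoneOn_of_deriv_nonpos (convex_Icc 0 p) (klF_continuous p).continuousOn
  · intro x hx
    rw [interior_Icc] at hx
    exact (klF_hasDeriv p hx.1 (lt_trans hx.2 hp1)).differentiableAt.differentiableWithinAt
  · intro x hx
    rw [interior_Icc] at hx
    obtain ⟨ha, hb⟩ := hx
    rw [(klF_hasDeriv p ha (lt_trans hb hp1)).deriv]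
    have l1 : Real.log x ≤ Real.log p := Real.log_le_log ha (le_of_lt hb)
    have l2 : Real.log (1-p) ≤ Real.log (1-x) :=
      Real.log_le_log (by linarith) (by linarith)
    linarith

lemma klBer_self (p : ℝ) : klBer p p = 0 := by
  unfold klBer
  rcases eq_or_ne p 0 with h | h
  · simp [h]
  rcases eq_or_ne p 1 with h1 | h1
  · simp [h1]
  have hne : (1:ℝ) - p ≠ 0 := by
    intro hc; apply h1; linarith
  rw [div_self h, div_self hne]
  simp

lemma sanov_binom {Ω : Type*} [MeasurableSpace Ω] (μ : Measure Ω) [IsProbabilityMeasure μ]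
    (p : ℝ) (hp0 : 0 ≤ p) (hp1 : p ≤ 1)
    (Y : ℕ → Ω → ℤ) (hmeas : ∀ i, Measurable (Y i))
    (hindep : iIndepFun Y μ)
    (hval : ∀ i ω, Y i ω = 0 ∨ Y i ω = 1)
    (hdist : ∀ i, μ {ω | Y i ω = 1} = ENNReal.ofReal p) :
    ∀ n (j : ℕ), μ {ω | ∑ i ∈ Finset.range n, Y i ω = (j:ℤ)} =
      ENNReal.ofReal ((n.choose j) * p^j * (1-p)^(n-j)) := by
  have hq0 : 0 ≤ 1 - p := by linarith
  have hdist0 : ∀ i, μ {ω | Y i ω = 0} = ENNReal.ofReal (1-p) := by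
    intro i
    have hset : {ω | Y i ω = 0} = {ω | Y i ω = 1}ᶜ := by
      ext ω; simp only [Set.mem_setOf_eq, Set.mem_compl_iff]
      rcases hval i ω with h | h <;> simp [h]
    have hm : MeasurableSet {ω | Y i ω = 1} := hmeas i (measurableSet_singleton 1)
    rw [hset, measure_compl hm (measure_ne_top μ _), hdist i]
    rw [measure_univ, ← ENNReal.ofReal_one, ← ENNReal.ofReal_sub _ hp0]
  intro n
  induction n with
  | zero =>
    intro j
    rcases Nat.eq_zero_or_pos j with hj | hj
    · subst hj; simp
    · have : {ω : Ω | ∑ i ∈ Finset.range 0, Y i ω = (j:ℤ)} = ∅ := by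
        ext ω; simp; omega
      rw [this]
      have : Nat.choose 0 j = 0 := Nat.choose_eq_zero_of_lt hj
      simp [this]
  | succ n IH =>
    intro j
    have hSmeas : Measurable (fun ω => ∑ i ∈ Finset.range n, Y i ω) := by
      exact Finset.measurable_sum _ (fun i _ => hmeas i)
    have hSnonneg : ∀ ω, 0 ≤ ∑ i ∈ Finset.range n, Y i ω := by
      intro ω
      refine Finset.sum_nonneg fun i _ => ?_
      rcases hval i ω with h | h <;> simp [h]
    have hindepS : IndepFun (∑ i ∈ Finset.range n, Y i) (Y n) μ :=
      hindep.indepFun_sum_range_succ hmeas n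
    have hkey : ∀ (a b : ℤ), μ ({ω | ∑ i ∈ Finset.range n, Y i ω = a} ∩ {ω | Y n ω = b}) =
        μ {ω | ∑ i ∈ Finset.range n, Y i ω = a} * μ {ω | Y n ω = b} := by
      intro a b
      have h1 : {ω | ∑ i ∈ Finset.range n, Y i ω = a} =
          (∑ i ∈ Finset.range n, Y i) ⁻¹' {a} := by
        ext ω; simp [Finset.sum_apply]
      have h2 : {ω | Y n ω = b} = (Y n) ⁻¹' {b} := rfl
      rw [h1, h2]
      exact hindepS.measure_inter_preimage_eq_mul _ _ (measurableSet_singleton a)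
        (measurableSet_singleton b)
    rcases j with _ | k
    · -- j = 0
      have hset : {ω | ∑ i ∈ Finset.range (n+1), Y i ω = ((0:ℕ):ℤ)} =
          {ω | ∑ i ∈ Finset.range n, Y i ω = (0:ℤ)} ∩ {ω | Y n ω = 0} := by
        ext ω
        simp only [Set.mem_setOf_eq, Set.mem_inter_iff, Finset.sum_range_succ,
          Nat.cast_zero]
        constructor
        · intro h
          rcases hval n ω with h1 | h1
          · constructor
            · omega
            · exact h1
          · exfalso; have := hSnonneg ω; omega
        · rintro ⟨h1, h2⟩; omega
      have IH0 := IH 0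
      rw [Nat.cast_zero] at IH0
      rw [hset, hkey 0 0, IH0, hdist0 n, ← ENNReal.ofReal_mul (by positivity)]
      congr 1
      simp [pow_succ]
    · -- j = k+1
      have hset : {ω | ∑ i ∈ Finset.range (n+1), Y i ω = ((k+1:ℕ):ℤ)} =
          ({ω | ∑ i ∈ Finset.range n, Y i ω = ((k+1:ℕ):ℤ)} ∩ {ω | Y n ω = 0}) ∪
          ({ω | ∑ i ∈ Finset.range n, Y i ω = ((k:ℕ):ℤ)} ∩ {ω | Y n ω = 1}) := by
        ext ω
        simp only [Set.mem_setOf_eq, Set.mem_inter_iff, Set.mem_union,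
          Finset.sum_range_succ]
        rcases hval n ω with h1 | h1 <;> simp [h1] <;> omega
      have hdisj : Disjoint
          ({ω | ∑ i ∈ Finset.range n, Y i ω = ((k+1:ℕ):ℤ)} ∩ {ω | Y n ω = 0})
          ({ω | ∑ i ∈ Finset.range n, Y i ω = ((k:ℕ):ℤ)} ∩ {ω | Y n ω = 1}) := by
        refine Set.disjoint_left.2 ?_
        rintro ω ⟨_, h2⟩ ⟨_, h4⟩
        simp only [Set.mem_setOf_eq] at h2 h4
        omega
      have hm2 : MeasurableSet
          ({ω | ∑ i ∈ Finset.range n, Y i ω = ((k:ℕ):ℤ)} ∩ {ω | Y n ω = 1}) := by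
        exact (hSmeas (measurableSet_singleton _)).inter
          ((hmeas n) (measurableSet_singleton _))
      rw [hset, measure_union hdisj hm2, hkey _ 0, hkey _ 1, IH (k+1), IH k,
        hdist0 n, hdist n, ← ENNReal.ofReal_mul (by positivity),
        ← ENNReal.ofReal_mul (by positivity), ← ENNReal.ofReal_add (by positivity)
        (by positivity)]
      congr 1
      have hchoose : (n+1).choose (k+1) = n.choose k + n.choose (k+1) :=
        Nat.choose_succ_succ n k
      rcases lt_or_ge k n with hk | hk
      · have h1 : n - k = (n - (k+1)) + 1 := by omega
        have h2 : n + 1 - (k + 1) = n - k := by omega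
        rw [hchoose, h1, h2, h1]
        push_cast
        ring
      · have h1 : n.choose (k+1) = 0 := Nat.choose_eq_zero_of_lt (by omega)
        rcases eq_or_lt_of_le hk with hk' | hk'
        · have h2 : n - k = 0 := by omega
          have h3 : n + 1 - (k + 1) = 0 := by omega
          rw [hchoose, h1, h2, h3]
          push_cast
          simp [pow_succ]
          ring
        · have h2 : n.choose k = 0 := Nat.choose_eq_zero_of_lt hk'
          have h3 : (n+1).choose (k+1) = 0 := Nat.choose_eq_zero_of_lt (by omega)
          rw [h1, h2, h3]
          push_cast
          ring

lemma binom_sum_one (x : ℝ) (n : ℕ) :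
    ∑ k ∈ Finset.range (n+1), (n.choose k : ℝ) * x^k * (1-x)^(n-k) = 1 := by
  have h := add_pow x (1-x) n
  have hx : x + (1-x) = 1 := by ring
  rw [hx, one_pow] at h
  have h2 : ∑ k ∈ Finset.range (n+1), (n.choose k : ℝ) * x^k * (1-x)^(n-k)
      = ∑ k ∈ Finset.range (n+1), x^k * (1-x)^(n-k) * (n.choose k : ℝ) :=
    Finset.sum_congr rfl fun k _ => by ring
  rw [h2]
  exact h.symm

lemma binom_term_max (n j : ℕ) (hn : 0 < n) (hj : j ≤ n) :
    ∀ k, k ≤ n → (n.choose k : ℝ) * ((j:ℝ)/n)^k * (1-(j:ℝ)/n)^(n-k)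
      ≤ (n.choose j : ℝ) * ((j:ℝ)/n)^j * (1-(j:ℝ)/n)^(n-j) := by
  have hnR : (0:ℝ) < n := by exact_mod_cast hn
  set x : ℝ := (j:ℝ)/n with hxdef
  set u : ℕ → ℝ := fun k => (n.choose k : ℝ) * x^k * (1-x)^(n-k) with hu
  show ∀ k, k ≤ n → u k ≤ u j
  have hx0 : 0 ≤ x := by positivity
  have hx1 : x ≤ 1 := by
    rw [hxdef, div_le_one hnR]; exact_mod_cast hj
  have hunn : ∀ k, 0 ≤ u k := by
    intro k
    have h1 : (0:ℝ) ≤ 1 - x := by linarith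
    positivity
  rcases Nat.eq_zero_or_pos j with hj0 | hjpos
  · -- j = 0, x = 0
    subst hj0
    intro k hk
    have hx : x = 0 := by simp [hxdef]
    rcases Nat.eq_zero_or_pos k with hk0 | hkpos
    · subst hk0; exact le_refl _
    · have : u k = 0 := by
        simp only [hu, hx]
        rw [zero_pow (by omega)]
        ring
      rw [this]
      have : u 0 = 1 := by simp [hu, hx]
      rw [this]; norm_num
  rcases eq_or_lt_of_le hj with hjn | hjn
  · -- j = n, x = 1
    subst hjn
    intro k hk
    have hx : x = 1 := by rw [hxdef]; exact div_self (ne_of_gt hnR)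
    rcases eq_or_lt_of_le hk with hkn | hkn
    · subst hkn; exact le_refl _
    · have h1 : u k = 0 := by
        simp only [hu, hx]
        rw [show (1:ℝ) - 1 = 0 by ring, zero_pow (by omega)]
        ring
      rw [h1]
      have h2 : u j = 1 := by
        simp only [hu, hx]
        simp
      rw [h2]; norm_num
  -- 0 < j < n, 0 < x < 1
  have hxpos : 0 < x := by
    rw [hxdef]
    apply div_pos _ hnR
    exact_mod_cast hjpos
  have hxlt : x < 1 := by
    rw [hxdef, div_lt_one hnR]
    exact_mod_cast hjn
  have hstep : ∀ k, k < n → ((k:ℝ)+1) * (1-x) * u (k+1) = ((n:ℝ)-(k:ℝ)) * x * u k := by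
    intro k hk
    have hc : ((n.choose (k+1)) : ℝ) * ((k:ℝ)+1) = (n.choose k : ℝ) * ((n:ℝ)-(k:ℝ)) := by
      have h := Nat.choose_succ_right_eq n k
      have h2 : ((n.choose (k+1) * (k+1) : ℕ) : ℝ) = ((n.choose k * (n - k) : ℕ) : ℝ) :=
        congrArg _ h
      push_cast [Nat.cast_sub hk.le] at h2
      linarith [h2]
    have hpow : (1-x)^(n-k) = (1-x)^(n-(k+1)) * (1-x) := by
      rw [← pow_succ]; congr 1; omega
    show ((k:ℝ)+1) * (1-x) * ((n.choose (k+1) : ℝ) * x^(k+1) * (1-x)^(n-(k+1)))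
       = ((n:ℝ)-(k:ℝ)) * x * ((n.choose k : ℝ) * x^k * (1-x)^(n-k))
    rw [hpow, pow_succ]
    linear_combination (x^k * x * (1-x) * (1-x)^(n-(k+1))) * hc
  have hmono : ∀ k, k + 1 ≤ j → u k ≤ u (k+1) := by
    intro k hk
    have hkn : k < n := by omega
    have hs := hstep k hkn
    have hcoef : ((k:ℝ)+1)*(1-x) ≤ ((n:ℝ)-(k:ℝ))*x := by
      have hnat : (k+1) * (n - j) ≤ (n - k) * j := by
        calc (k+1) * (n-j) ≤ j * (n-j) := Nat.mul_le_mul_right _ hk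
        _ ≤ j * (n-k) := Nat.mul_le_mul_left _ (by omega)
        _ = (n-k) * j := Nat.mul_comm _ _
      have hcast : ((k:ℝ)+1) * ((n:ℝ)-(j:ℝ)) ≤ ((n:ℝ)-(k:ℝ)) * (j:ℝ) := by
        have := (Nat.cast_le (α := ℝ)).2 hnat
        push_cast [Nat.cast_sub hj, Nat.cast_sub hkn.le] at this
        linarith
      have e1 : (1 - x) * (n:ℝ) = (n:ℝ) - (j:ℝ) := by
        rw [hxdef]; field_simp
      have e2 : x * (n:ℝ) = (j:ℝ) := by
        rw [hxdef]; field_simp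
      have hm : (((k:ℝ)+1)*(1-x)) * n ≤ (((n:ℝ)-(k:ℝ))*x) * n := by
        calc (((k:ℝ)+1)*(1-x)) * n = ((k:ℝ)+1) * ((1-x)*(n:ℝ)) := by ring
        _ = ((k:ℝ)+1) * ((n:ℝ)-(j:ℝ)) := by rw [e1]
        _ ≤ ((n:ℝ)-(k:ℝ)) * (j:ℝ) := hcast
        _ = ((n:ℝ)-(k:ℝ)) * (x*(n:ℝ)) := by rw [e2]
        _ = (((n:ℝ)-(k:ℝ))*x) * n := by ring
      exact le_of_mul_le_mul_right hm hnR
    have hpos : 0 < ((k:ℝ)+1)*(1-x) := by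
      apply mul_pos (by positivity) (by linarith)
    have hchain : ((k:ℝ)+1)*(1-x) * u k ≤ ((k:ℝ)+1)*(1-x) * u (k+1) := by
      rw [hs]
      exact mul_le_mul_of_nonneg_right hcoef (hunn k)
    exact le_of_mul_le_mul_left hchain hpos
  have hanti : ∀ k, j ≤ k → k < n → u (k+1) ≤ u k := by
    intro k hjk hkn
    have hs := hstep k hkn
    have hcoef : ((n:ℝ)-(k:ℝ))*x ≤ ((k:ℝ)+1)*(1-x) := by
      have hnat : (n - k) * j ≤ (k+1) * (n - j) := by
        calc (n-k) * j ≤ (n-j) * j := Nat.mul_le_mul_right _ (by omega)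
        _ ≤ (n-j) * (k+1) := Nat.mul_le_mul_left _ (by omega)
        _ = (k+1) * (n-j) := Nat.mul_comm _ _
      have hcast : ((n:ℝ)-(k:ℝ)) * (j:ℝ) ≤ ((k:ℝ)+1) * ((n:ℝ)-(j:ℝ)) := by
        have := (Nat.cast_le (α := ℝ)).2 hnat
        push_cast [Nat.cast_sub hj, Nat.cast_sub hkn.le] at this
        linarith
      have e1 : (1 - x) * (n:ℝ) = (n:ℝ) - (j:ℝ) := by
        rw [hxdef]; field_simp
      have e2 : x * (n:ℝ) = (j:ℝ) := by
        rw [hxdef]; field_simp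
      have hm : (((n:ℝ)-(k:ℝ))*x) * n ≤ (((k:ℝ)+1)*(1-x)) * n := by
        calc (((n:ℝ)-(k:ℝ))*x) * n = ((n:ℝ)-(k:ℝ)) * (x*(n:ℝ)) := by ring
        _ = ((n:ℝ)-(k:ℝ)) * (j:ℝ) := by rw [e2]
        _ ≤ ((k:ℝ)+1) * ((n:ℝ)-(j:ℝ)) := hcast
        _ = ((k:ℝ)+1) * ((1-x)*(n:ℝ)) := by rw [e1]
        _ = (((k:ℝ)+1)*(1-x)) * n := by ring
      exact le_of_mul_le_mul_right hm hnR
    have hpos : 0 < ((k:ℝ)+1)*(1-x) := by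
      apply mul_pos (by positivity) (by linarith)
    have hchain : ((k:ℝ)+1)*(1-x) * u (k+1) ≤ ((k:ℝ)+1)*(1-x) * u k := by
      rw [hs]
      exact mul_le_mul_of_nonneg_right hcoef (hunn k)
    exact le_of_mul_le_mul_left hchain hpos
  have hup : ∀ d, d ≤ j → u (j - d) ≤ u j := by
    intro d
    induction d with
    | zero => intro _; simp
    | succ m IH =>
      intro hdj
      have h1 : u (j - (m+1)) ≤ u (j - (m+1) + 1) := hmono _ (by omega)
      have h2 : j - (m+1) + 1 = j - m := by omega
      rw [h2] at h1
      exact le_trans h1 (IH (by omega))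
  have hdown : ∀ d, j + d ≤ n → u (j + d) ≤ u j := by
    intro d
    induction d with
    | zero => intro _; simp
    | succ m IH =>
      intro hdn
      have h1 : u (j + m + 1) ≤ u (j + m) := hanti _ (by omega) (by omega)
      have h2 : j + (m+1) = j + m + 1 := by omega
      rw [h2]
      exact le_trans h1 (IH (by omega))
  intro k hk
  rcases le_or_gt k j with hkj | hkj
  · have : k = j - (j - k) := by omega
    rw [this]
    exact hup _ (by omega)
  · have : k = j + (k - j) := by omega
    rw [this]
    exact hdown _ (by omega)

lemma binom_term_id (p : ℝ) (hp0 : 0 < p) (hp1 : p < 1) (n j : ℕ) (hn : 0 < n) (hj : j ≤ n) :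
    (n.choose j : ℝ) * p^j * (1-p)^(n-j)
      = ((n.choose j : ℝ) * ((j:ℝ)/n)^j * (1-(j:ℝ)/n)^(n-j))
        * Real.exp (-(n:ℝ) * klBer ((j:ℝ)/n) p) := by
  have hnR : (0:ℝ) < n := by exact_mod_cast hn
  have hq : (0:ℝ) < 1 - p := by linarith
  rcases Nat.eq_zero_or_pos j with hj0 | hjpos
  · subst hj0
    have hkl : klBer 0 p = - Real.log (1-p) := by
      unfold klBer
      rw [zero_div, Real.log_zero]
      rw [show (1:ℝ) - 0 = 1 by ring, one_div, Real.log_inv]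
      ring
    simp only [Nat.cast_zero, zero_div, hkl]
    rw [show -(n:ℝ) * -Real.log (1-p) = (n:ℝ) * Real.log (1-p) by ring]
    rw [← Real.log_pow, Real.exp_log (by positivity)]
    simp
  rcases eq_or_lt_of_le hj with hjn | hjn
  · subst hjn
    have hx : (j:ℝ)/(j:ℝ) = 1 := div_self (by positivity)
    have hkl : klBer 1 p = - Real.log p := by
      unfold klBer
      rw [one_div, Real.log_inv]
      simp
    rw [hx, hkl]
    rw [show -(j:ℝ) * -Real.log p = (j:ℝ) * Real.log p by ring]
    rw [← Real.log_pow, Real.exp_log (by positivity)]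
    simp
  -- 0 < j < n
  obtain ⟨x, hxdef⟩ : ∃ x : ℝ, x = (j:ℝ)/n := ⟨_, rfl⟩
  rw [← hxdef]
  have hxpos : 0 < x := by
    rw [hxdef]; apply div_pos _ hnR; exact_mod_cast hjpos
  have hxlt : x < 1 := by
    rw [hxdef, div_lt_one hnR]; exact_mod_cast hjn
  have h1x : 0 < 1 - x := by linarith
  have hnxj : (n:ℝ) * x = (j:ℝ) := by
    rw [hxdef]; field_simp
  have hnx1 : (n:ℝ) * (1 - x) = ((n - j : ℕ) : ℝ) := by
    rw [Nat.cast_sub hj, hxdef]; field_simp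
  have hlog : -(n:ℝ) * klBer x p
      = Real.log ((p/x)^j * ((1-p)/(1-x))^(n-j)) := by
    unfold klBer
    rw [Real.log_mul (by positivity) (by positivity), Real.log_pow, Real.log_pow,
      Real.log_div (ne_of_gt hp0) (ne_of_gt hxpos),
      Real.log_div (ne_of_gt hq) (ne_of_gt h1x),
      Real.log_div (ne_of_gt hxpos) (ne_of_gt hp0),
      Real.log_div (ne_of_gt h1x) (ne_of_gt hq)]
    have e1 : ((n - j : ℕ) : ℝ) = (n:ℝ) - (j:ℝ) := Nat.cast_sub hj
    have hnx1e : (n:ℝ) * (1-x) = (n:ℝ) - (j:ℝ) := by rw [hnx1, e1]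
    rw [e1]
    linear_combination (Real.log p - Real.log x) * hnxj +
      (Real.log (1 - p) - Real.log (1 - x)) * hnx1e
  rw [hlog, Real.exp_log (by positivity)]
  have e2 : x^j * (p/x)^j = p^j := by
    rw [div_pow, mul_comm, div_mul_cancel₀ _ (pow_ne_zero j (ne_of_gt hxpos))]
  have e3 : (1-x)^(n-j) * ((1-p)/(1-x))^(n-j) = (1-p)^(n-j) := by
    rw [div_pow, mul_comm, div_mul_cancel₀ _ (pow_ne_zero (n-j) (ne_of_gt h1x))]
  calc (n.choose j : ℝ) * p^j * (1-p)^(n-j)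
      = (n.choose j : ℝ) * (x^j * (p/x)^j) * ((1-x)^(n-j) * ((1-p)/(1-x))^(n-j)) := by
        rw [e2, e3]
  _ = _ := by ring

lemma binom_term_ub (p : ℝ) (hp0 : 0 < p) (hp1 : p < 1) (n j : ℕ) (hn : 0 < n) (hj : j ≤ n) :
    (n.choose j : ℝ) * p^j * (1-p)^(n-j) ≤ Real.exp (-(n:ℝ) * klBer ((j:ℝ)/n) p) := by
  rw [binom_term_id p hp0 hp1 n j hn hj]
  have hle1 : (n.choose j : ℝ) * ((j:ℝ)/n)^j * (1-(j:ℝ)/n)^(n-j) ≤ 1 := by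
    have hnR : (0:ℝ) < n := by exact_mod_cast hn
    have hx1 : (j:ℝ)/n ≤ 1 := by
      rw [div_le_one hnR]; exact_mod_cast hj
    have h1x : (0:ℝ) ≤ 1 - (j:ℝ)/n := by linarith
    calc (n.choose j : ℝ) * ((j:ℝ)/n)^j * (1-(j:ℝ)/n)^(n-j)
        ≤ ∑ k ∈ Finset.range (n+1), (n.choose k : ℝ) * ((j:ℝ)/n)^k * (1-(j:ℝ)/n)^(n-k) :=
          Finset.single_le_sum (f := fun k => (n.choose k : ℝ) * ((j:ℝ)/n)^k * (1-(j:ℝ)/n)^(n-k))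
            (fun k _ => by positivity) (Finset.mem_range.2 (by omega))
    _ = 1 := binom_sum_one _ n
  calc (n.choose j : ℝ) * ((j:ℝ)/n)^j * (1-(j:ℝ)/n)^(n-j) * Real.exp (-(n:ℝ) * klBer ((j:ℝ)/n) p)
      ≤ 1 * Real.exp (-(n:ℝ) * klBer ((j:ℝ)/n) p) :=
        mul_le_mul_of_nonneg_right hle1 (le_of_lt (Real.exp_pos _))
  _ = Real.exp (-(n:ℝ) * klBer ((j:ℝ)/n) p) := one_mul _

lemma binom_term_lb (p : ℝ) (hp0 : 0 < p) (hp1 : p < 1) (n j : ℕ) (hn : 0 < n) (hj : j ≤ n) :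
    Real.exp (-(n:ℝ) * klBer ((j:ℝ)/n) p) / ((n:ℝ)+1)
      ≤ (n.choose j : ℝ) * p^j * (1-p)^(n-j) := by
  rw [binom_term_id p hp0 hp1 n j hn hj]
  have hge : 1/((n:ℝ)+1) ≤ (n.choose j : ℝ) * ((j:ℝ)/n)^j * (1-(j:ℝ)/n)^(n-j) := by
    have hmax := binom_term_max n j hn hj
    have hsum := binom_sum_one ((j:ℝ)/n) n
    have h1 : (1:ℝ) ≤ ((n:ℝ)+1) * ((n.choose j : ℝ) * ((j:ℝ)/n)^j * (1-(j:ℝ)/n)^(n-j)) := by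
      calc (1:ℝ) = ∑ k ∈ Finset.range (n+1),
            (n.choose k : ℝ) * ((j:ℝ)/n)^k * (1-(j:ℝ)/n)^(n-k) := hsum.symm
      _
          ≤ ∑ _k ∈ Finset.range (n+1),
            (n.choose j : ℝ) * ((j:ℝ)/n)^j * (1-(j:ℝ)/n)^(n-j) := by
            apply Finset.sum_le_sum
            intro k hk
            exact hmax k (by simp at hk; omega)
      _ = ((n:ℝ)+1) * ((n.choose j : ℝ) * ((j:ℝ)/n)^j * (1-(j:ℝ)/n)^(n-j)) := by
            rw [Finset.sum_const, Finset.card_range]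
            push_cast
            ring
    have hpos : (0:ℝ) < (n:ℝ)+1 := by positivity
    rw [div_le_iff₀ hpos]
    linarith
  calc Real.exp (-(n:ℝ) * klBer ((j:ℝ)/n) p) / ((n:ℝ)+1)
      = (1/((n:ℝ)+1)) * Real.exp (-(n:ℝ) * klBer ((j:ℝ)/n) p) := by ring
  _ ≤ (n.choose j : ℝ) * ((j:ℝ)/n)^j * (1-(j:ℝ)/n)^(n-j)
        * Real.exp (-(n:ℝ) * klBer ((j:ℝ)/n) p) :=
      mul_le_mul_of_nonneg_right hge (le_of_lt (Real.exp_pos _))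

lemma log_succ_div_tendsto :
    Tendsto (fun n : ℕ => Real.log ((n:ℝ)+1)/(n:ℝ)) atTop (nhds 0) := by
  have h1 : Tendsto (fun x : ℝ => Real.log x / x) atTop (nhds 0) :=
    Real.isLittleO_log_id_atTop.tendsto_div_nhds_zero
  have h2 : Tendsto (fun n : ℕ => ((n:ℝ)+1)) atTop atTop :=
    tendsto_atTop_add_const_right _ 1 tendsto_natCast_atTop_atTop
  have h3 : Tendsto (fun n : ℕ => Real.log ((n:ℝ)+1)/((n:ℝ)+1)) atTop (nhds 0) := h1.comp h2
  have h4 : Tendsto (fun n : ℕ => ((n:ℝ)+1)/(n:ℝ)) atTop (nhds 1) := by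
    have h5 : Tendsto (fun n : ℕ => 1 + 1/(n:ℝ)) atTop (nhds (1 + 0)) :=
      tendsto_const_nhds.add tendsto_one_div_atTop_nhds_zero_nat
    rw [add_zero] at h5
    apply h5.congr'
    filter_upwards [eventually_gt_atTop 0] with n hn
    have hnR : (0:ℝ) < n := by exact_mod_cast hn
    field_simp
  have h6 := h3.mul h4
  rw [zero_mul] at h6
  apply h6.congr'
  filter_upwards [eventually_gt_atTop 0] with n hn
  have hnR : (0:ℝ) < n := by exact_mod_cast hn
  field_simp

lemma sanov_calc (p pl pu : ℝ) (hp0 : 0 < p) (hp1 : p < 1)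
    (A : ℕ → ℝ)
    (hA : ∀ n : ℕ, 0 < n → A n = ∑ j ∈ (Finset.range (n+1)).filter
        (fun j : ℕ => pl*(n:ℝ) ≤ (j:ℝ) ∧ (j:ℝ) ≤ pu*(n:ℝ)), (n.choose j : ℝ) * p^j * (1-p)^(n-j))
    (xstar : ℝ) (hx0 : 0 ≤ xstar) (hx1 : xstar ≤ 1)
    (jn : ℕ → ℕ)
    (hjn : ∀ᶠ n in atTop, jn n ≤ n ∧ pl*(n:ℝ) ≤ (jn n : ℝ) ∧ (jn n : ℝ) ≤ pu*(n:ℝ))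
    (hjlim : Tendsto (fun n => (jn n : ℝ)/(n:ℝ)) atTop (nhds xstar))
    (hkl : ∀ᶠ n in atTop, ∀ j : ℕ, j ≤ n → pl*(n:ℝ) ≤ (j:ℝ) → (j:ℝ) ≤ pu*(n:ℝ) →
        klBer xstar p ≤ klBer ((j:ℝ)/n) p) :
    Tendsto (fun n : ℕ => -(1/(n:ℝ)) * Real.log (A n)) atTop (nhds (klBer xstar p)) := by
  have hlogn := log_succ_div_tendsto
  -- convergence of klBer ((jn n)/n) p to klBer xstar p
  have hklconv : Tendsto (fun n : ℕ => klBer ((jn n : ℝ)/(n:ℝ)) p) atTop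
      (nhds (klBer xstar p)) := by
    have h1 : Tendsto (fun n : ℕ => klF p ((jn n : ℝ)/(n:ℝ))) atTop (nhds (klF p xstar)) :=
      ((klF_continuous p).tendsto xstar).comp hjlim
    rw [← klBer_eq_klF p hp0 hp1 hx0 hx1] at h1
    apply h1.congr'
    filter_upwards [hjn, eventually_gt_atTop 0] with n hn hn0
    have hnR : (0:ℝ) < n := by exact_mod_cast hn0
    have hr0 : (0:ℝ) ≤ (jn n : ℝ)/(n:ℝ) := by positivity
    have hr1 : (jn n : ℝ)/(n:ℝ) ≤ 1 := by
      rw [div_le_one hnR]; exact_mod_cast hn.1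
    exact (klBer_eq_klF p hp0 hp1 hr0 hr1).symm
  have hub : Tendsto (fun n : ℕ => klBer ((jn n:ℝ)/(n:ℝ)) p + Real.log ((n:ℝ)+1)/(n:ℝ))
      atTop (nhds (klBer xstar p)) := by
    have := hklconv.add hlogn
    rwa [add_zero] at this
  have hlb : Tendsto (fun n : ℕ => klBer xstar p - Real.log ((n:ℝ)+1)/(n:ℝ))
      atTop (nhds (klBer xstar p)) := by
    have := (tendsto_const_nhds (x := klBer xstar p) (f := atTop (α := ℕ))).sub hlogn
    rwa [sub_zero] at this
  have common : ∀ᶠ n : ℕ in atTop,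
      klBer xstar p - Real.log ((n:ℝ)+1)/(n:ℝ) ≤ -(1/(n:ℝ)) * Real.log (A n) ∧
      -(1/(n:ℝ)) * Real.log (A n) ≤ klBer ((jn n:ℝ)/(n:ℝ)) p + Real.log ((n:ℝ)+1)/(n:ℝ) := by
    filter_upwards [hjn, hkl, eventually_gt_atTop 0] with n hn hkln hn0
    have hnR : (0:ℝ) < n := by exact_mod_cast hn0
    have hAe := hA n hn0
    set J : Finset ℕ := (Finset.range (n+1)).filter
        (fun j : ℕ => pl*(n:ℝ) ≤ (j:ℝ) ∧ (j:ℝ) ≤ pu*(n:ℝ)) with hJ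
    have hmem : jn n ∈ J := by
      rw [hJ, Finset.mem_filter, Finset.mem_range]
      exact ⟨by omega, hn.2.1, hn.2.2⟩
    have hAlb : Real.exp (-(n:ℝ) * klBer ((jn n:ℝ)/n) p) / ((n:ℝ)+1) ≤ A n := by
      rw [hAe]
      calc Real.exp (-(n:ℝ) * klBer ((jn n:ℝ)/n) p) / ((n:ℝ)+1)
          ≤ (n.choose (jn n) : ℝ) * p^(jn n) * (1-p)^(n - jn n) :=
            binom_term_lb p hp0 hp1 n (jn n) hn0 hn.1
      _ ≤ ∑ j ∈ J, (n.choose j : ℝ) * p^j * (1-p)^(n-j) := by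
          apply Finset.single_le_sum (f := fun j => (n.choose j : ℝ) * p^j * (1-p)^(n-j))
            (fun j _ => by
              have hq : (0:ℝ) ≤ 1 - p := by linarith
              positivity) hmem
    have hApos : 0 < A n := lt_of_lt_of_le (by positivity) hAlb
    have hAub : A n ≤ ((n:ℝ)+1) * Real.exp (-(n:ℝ) * klBer xstar p) := by
      rw [hAe]
      have hbound : ∀ j ∈ J, (n.choose j : ℝ) * p^j * (1-p)^(n-j)
          ≤ Real.exp (-(n:ℝ) * klBer xstar p) := by
        intro j hjJ
        rw [hJ, Finset.mem_filter, Finset.mem_range] at hjJ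
        obtain ⟨hjr, hj1, hj2⟩ := hjJ
        have hjle : j ≤ n := by omega
        calc (n.choose j : ℝ) * p^j * (1-p)^(n-j)
            ≤ Real.exp (-(n:ℝ) * klBer ((j:ℝ)/n) p) :=
              binom_term_ub p hp0 hp1 n j hn0 hjle
        _ ≤ Real.exp (-(n:ℝ) * klBer xstar p) := by
            apply Real.exp_le_exp.2
            have := hkln j hjle hj1 hj2
            nlinarith
      calc ∑ j ∈ J, (n.choose j : ℝ) * p^j * (1-p)^(n-j)
          ≤ ∑ _j ∈ J, Real.exp (-(n:ℝ) * klBer xstar p) := Finset.sum_le_sum hbound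
      _ = (J.card : ℝ) * Real.exp (-(n:ℝ) * klBer xstar p) := by
          rw [Finset.sum_const, nsmul_eq_mul]
      _ ≤ ((n:ℝ)+1) * Real.exp (-(n:ℝ) * klBer xstar p) := by
          apply mul_le_mul_of_nonneg_right _ (le_of_lt (Real.exp_pos _))
          have : J.card ≤ n+1 := le_trans (Finset.card_filter_le _ _)
            (le_of_eq (Finset.card_range _))
          exact_mod_cast this
    have hinvpos : (0:ℝ) ≤ 1/(n:ℝ) := by positivity
    have hdiv : Real.log ((n:ℝ)+1)/(n:ℝ) = (1/(n:ℝ)) * Real.log ((n:ℝ)+1) := by ring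
    constructor
    · -- lower
      have hlog : Real.log (A n) ≤ Real.log ((n:ℝ)+1) + (-(n:ℝ) * klBer xstar p) := by
        calc Real.log (A n) ≤ Real.log (((n:ℝ)+1) * Real.exp (-(n:ℝ) * klBer xstar p)) :=
            Real.log_le_log hApos hAub
        _ = Real.log ((n:ℝ)+1) + (-(n:ℝ) * klBer xstar p) := by
            rw [Real.log_mul (by positivity) (Real.exp_ne_zero _), Real.log_exp]
      have h1 := mul_le_mul_of_nonneg_left hlog hinvpos
      have h2 : (1/(n:ℝ)) * (-(n:ℝ) * klBer xstar p) = -klBer xstar p := by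
        field_simp
      rw [mul_add, h2] at h1
      linarith [h1, hdiv]
    · -- upper
      have hlog2 : -(n:ℝ) * klBer ((jn n:ℝ)/n) p - Real.log ((n:ℝ)+1) ≤ Real.log (A n) := by
        calc -(n:ℝ) * klBer ((jn n:ℝ)/n) p - Real.log ((n:ℝ)+1)
            = Real.log (Real.exp (-(n:ℝ) * klBer ((jn n:ℝ)/n) p) / ((n:ℝ)+1)) := by
              rw [Real.log_div (Real.exp_ne_zero _) (by positivity), Real.log_exp]
        _ ≤ Real.log (A n) := Real.log_le_log (by positivity) hAlb
      have h1 := mul_le_mul_of_nonneg_left hlog2 hinvpos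
      have h2 : (1/(n:ℝ)) * (-(n:ℝ) * klBer ((jn n:ℝ)/n) p) = -klBer ((jn n:ℝ)/n) p := by
        field_simp
      rw [mul_sub, h2] at h1
      linarith [h1, hdiv]
  exact tendsto_of_tendsto_of_tendsto_of_le_of_le' hlb hub
    (common.mono fun n h => h.1) (common.mono fun n h => h.2)

lemma ratio_tendsto (c : ℝ) (jn : ℕ → ℕ)
    (h : ∀ᶠ n : ℕ in atTop, c*(n:ℝ) - 1 ≤ (jn n : ℝ) ∧ (jn n:ℝ) ≤ c*(n:ℝ) + 1) :
    Tendsto (fun n : ℕ => (jn n:ℝ)/(n:ℝ)) atTop (nhds c) := by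
  have hlo : Tendsto (fun n : ℕ => c - 1/(n:ℝ)) atTop (nhds c) := by
    have := (tendsto_const_nhds (x := c) (f := atTop (α := ℕ))).sub
      tendsto_one_div_atTop_nhds_zero_nat
    rwa [sub_zero] at this
  have hhi : Tendsto (fun n : ℕ => c + 1/(n:ℝ)) atTop (nhds c) := by
    have := (tendsto_const_nhds (x := c) (f := atTop (α := ℕ))).add
      tendsto_one_div_atTop_nhds_zero_nat
    rwa [add_zero] at this
  apply tendsto_of_tendsto_of_tendsto_of_le_of_le' hlo hhi
  · filter_upwards [h, eventually_gt_atTop 0] with n hn hn0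
    have hnR : (0:ℝ) < n := by exact_mod_cast hn0
    have hinv : (1/(n:ℝ))*(n:ℝ) = 1 := by field_simp
    rw [sub_le_iff_le_add, div_add' _ _ _ (ne_of_gt hnR), le_div_iff₀ hnR]
    nlinarith [hn.1, hinv]
  · filter_upwards [h, eventually_gt_atTop 0] with n hn hn0
    have hnR : (0:ℝ) < n := by exact_mod_cast hn0
    have hinv : (1/(n:ℝ))*(n:ℝ) = 1 := by field_simp
    rw [div_le_iff₀ hnR]
    nlinarith [hn.2, hinv]

lemma nc_ev (a b : ℝ) (hab : a < b) : ∀ᶠ n : ℕ in atTop, a*(n:ℝ) + 1 ≤ b*(n:ℝ) := by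
  have h1 : Tendsto (fun n : ℕ => (b-a)*(n:ℝ)) atTop atTop :=
    (tendsto_natCast_atTop_atTop (R := ℝ)).const_mul_atTop (by linarith)
  filter_upwards [h1.eventually_ge_atTop 1] with n hn
  nlinarith

/-- Sanov's theorem for Bernoulli random variables. -/
theorem stmt7 {Ω : Type*} [MeasurableSpace Ω] (μ : Measure Ω) [IsProbabilityMeasure μ]
    (p : ℝ) (hp0 : 0 < p) (hp1 : p < 1)
    (X : ℕ → Ω → ℤ) (hmeas : ∀ i, Measurable (X i))
    (hindep : iIndepFun X μ)
    (hval : ∀ i ω, X i ω = 1 ∨ X i ω = -1)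
    (hdist : ∀ i, μ {ω | X i ω = 1} = ENNReal.ofReal p)
    (pl pu : ℝ) (hpl : 0 ≤ pl) (hlu : pl < pu) (hpu : pu ≤ 1) :
    (p < pl →
      Tendsto (fun n : ℕ => -(1/(n:ℝ)) * Real.log ((μ {ω |
          2*pl - 1 ≤ ((∑ k ∈ Finset.range n, X k ω : ℤ) : ℝ)/n ∧
          ((∑ k ∈ Finset.range n, X k ω : ℤ) : ℝ)/n ≤ 2*pu - 1}).toReal))
        atTop (nhds (klBer pl p))) ∧
    (pl ≤ p → p ≤ pu →
      Tendsto (fun n : ℕ => -(1/(n:ℝ)) * Real.log ((μ {ω |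
          2*pl - 1 ≤ ((∑ k ∈ Finset.range n, X k ω : ℤ) : ℝ)/n ∧
          ((∑ k ∈ Finset.range n, X k ω : ℤ) : ℝ)/n ≤ 2*pu - 1}).toReal))
        atTop (nhds 0)) ∧
    (pu < p →
      Tendsto (fun n : ℕ => -(1/(n:ℝ)) * Real.log ((μ {ω |
          2*pl - 1 ≤ ((∑ k ∈ Finset.range n, X k ω : ℤ) : ℝ)/n ∧
          ((∑ k ∈ Finset.range n, X k ω : ℤ) : ℝ)/n ≤ 2*pu - 1}).toReal))
        atTop (nhds (klBer pu p))) := by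
  classical
  have hpl1 : pl ≤ 1 := le_trans (le_of_lt hlu) hpu
  have hpu0 : 0 ≤ pu := le_trans hpl (le_of_lt hlu)
  set g : ℤ → ℤ := fun z => if z = 1 then 1 else 0 with hg
  have hgmeas : Measurable g := Measurable.of_discrete
  set Y : ℕ → Ω → ℤ := fun i => g ∘ X i with hY
  have hYmeas : ∀ i, Measurable (Y i) := fun i => hgmeas.comp (hmeas i)
  have hYindep : iIndepFun Y μ :=
    hindep.comp _ (fun _ => hgmeas)
  have hYval : ∀ i ω, Y i ω = 0 ∨ Y i ω = 1 := by
    intro i ω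
    rcases hval i ω with h | h <;> simp [hY, hg, h]
  have hYdist : ∀ i, μ {ω | Y i ω = 1} = ENNReal.ofReal p := by
    intro i
    have : {ω | Y i ω = 1} = {ω | X i ω = 1} := by
      ext ω; rcases hval i ω with h | h <;> simp [hY, hg, h]
    rw [this]; exact hdist i
  have hbin := sanov_binom μ p (le_of_lt hp0) (le_of_lt hp1) Y hYmeas hYindep hYval hYdist
  -- representation of the measure of the event
  have hA : ∀ n : ℕ, 0 < n → (μ {ω |
          2*pl - 1 ≤ ((∑ k ∈ Finset.range n, X k ω : ℤ) : ℝ)/n ∧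
          ((∑ k ∈ Finset.range n, X k ω : ℤ) : ℝ)/n ≤ 2*pu - 1}).toReal
      = ∑ j ∈ (Finset.range (n+1)).filter
          (fun j : ℕ => pl*(n:ℝ) ≤ (j:ℝ) ∧ (j:ℝ) ≤ pu*(n:ℝ)),
        (n.choose j : ℝ) * p^j * (1-p)^(n-j) := by
    intro n hn
    have hnR : (0:ℝ) < n := by exact_mod_cast hn
    have hT0 : ∀ ω, 0 ≤ ∑ i ∈ Finset.range n, Y i ω := fun ω =>
      Finset.sum_nonneg fun i _ => by rcases hYval i ω with h | h <;> simp [h]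
    have hTn : ∀ ω, ∑ i ∈ Finset.range n, Y i ω ≤ n := by
      intro ω
      calc ∑ i ∈ Finset.range n, Y i ω ≤ ∑ _i ∈ Finset.range n, 1 :=
          Finset.sum_le_sum (fun i _ => by rcases hYval i ω with h | h <;> simp [h])
      _ = n := by simp
    have hXT : ∀ ω, (∑ k ∈ Finset.range n, X k ω)
        = 2 * (∑ i ∈ Finset.range n, Y i ω) - n := by
      intro ω
      have h1 : ∀ i ∈ Finset.range n, X i ω = 2 * Y i ω - 1 := by
        intro i _
        rcases hval i ω with h | h <;> simp [hY, hg, h]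
      rw [Finset.sum_congr rfl h1, Finset.sum_sub_distrib, ← Finset.mul_sum]
      simp
    have hEeq : {ω | 2*pl - 1 ≤ ((∑ k ∈ Finset.range n, X k ω : ℤ) : ℝ)/n ∧
          ((∑ k ∈ Finset.range n, X k ω : ℤ) : ℝ)/n ≤ 2*pu - 1}
        = ⋃ j ∈ (Finset.range (n+1)).filter
            (fun j : ℕ => pl*(n:ℝ) ≤ (j:ℝ) ∧ (j:ℝ) ≤ pu*(n:ℝ)),
          {ω | ∑ i ∈ Finset.range n, Y i ω = (j:ℤ)} := by
      ext ω
      simp only [Set.mem_setOf_eq, Set.mem_iUnion, Finset.mem_filter, Finset.mem_range,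
        exists_prop]
      have hcast : ((∑ k ∈ Finset.range n, X k ω : ℤ) : ℝ)
          = 2 * ((∑ i ∈ Finset.range n, Y i ω : ℤ) : ℝ) - n := by
        rw [hXT ω]; push_cast; ring
      rw [hcast]
      constructor
      · rintro ⟨h1, h2⟩
        rw [sub_le_iff_le_add, div_add' _ _ _ (ne_of_gt hnR), le_div_iff₀ hnR] at h1
        rw [div_le_iff₀ hnR] at h2
        refine ⟨(∑ i ∈ Finset.range n, Y i ω).toNat, ⟨?_, ?_, ?_⟩, ?_⟩
        · have := hTn ω; omega
        · have he : (((∑ i ∈ Finset.range n, Y i ω).toNat : ℕ) : ℝ)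
              = ((∑ i ∈ Finset.range n, Y i ω : ℤ) : ℝ) := by
            rw [← Int.cast_natCast, Int.toNat_of_nonneg (hT0 ω)]
          rw [he]
          nlinarith [h1]
        · have he : (((∑ i ∈ Finset.range n, Y i ω).toNat : ℕ) : ℝ)
              = ((∑ i ∈ Finset.range n, Y i ω : ℤ) : ℝ) := by
            rw [← Int.cast_natCast, Int.toNat_of_nonneg (hT0 ω)]
          rw [he]
          nlinarith [h2]
        · rw [Int.toNat_of_nonneg (hT0 ω)]
      · rintro ⟨j, ⟨hj1, hj2, hj3⟩, hj4⟩
        rw [hj4]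
        constructor
        · rw [sub_le_iff_le_add, div_add' _ _ _ (ne_of_gt hnR), le_div_iff₀ hnR]
          push_cast
          nlinarith [hj2]
        · rw [div_le_iff₀ hnR]
          push_cast
          nlinarith [hj3]
    rw [hEeq]
    have hdisj : Set.PairwiseDisjoint
        ((Finset.range (n+1)).filter
          (fun j : ℕ => pl*(n:ℝ) ≤ (j:ℝ) ∧ (j:ℝ) ≤ pu*(n:ℝ)) : Finset ℕ)
        (fun j : ℕ => {ω | ∑ i ∈ Finset.range n, Y i ω = (j:ℤ)}) := by
      intro a _ b _ hab
      apply Set.disjoint_left.2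
      rintro ω h1 h2
      simp only [Set.mem_setOf_eq] at h1 h2
      apply hab
      have : (a:ℤ) = (b:ℤ) := by rw [← h1, ← h2]
      exact_mod_cast this
    have hmb : ∀ j ∈ (Finset.range (n+1)).filter
        (fun j : ℕ => pl*(n:ℝ) ≤ (j:ℝ) ∧ (j:ℝ) ≤ pu*(n:ℝ)),
        MeasurableSet {ω | ∑ i ∈ Finset.range n, Y i ω = (j:ℤ)} := by
      intro j _
      exact (Finset.measurable_sum _ (fun i _ => hYmeas i)) (measurableSet_singleton _)
    rw [measure_biUnion_finset hdisj hmb]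
    have hsum : ∑ j ∈ (Finset.range (n+1)).filter
        (fun j : ℕ => pl*(n:ℝ) ≤ (j:ℝ) ∧ (j:ℝ) ≤ pu*(n:ℝ)),
        μ {ω | ∑ i ∈ Finset.range n, Y i ω = (j:ℤ)}
        = ∑ j ∈ (Finset.range (n+1)).filter
          (fun j : ℕ => pl*(n:ℝ) ≤ (j:ℝ) ∧ (j:ℝ) ≤ pu*(n:ℝ)),
          ENNReal.ofReal ((n.choose j : ℝ) * p^j * (1-p)^(n-j)) :=
      Finset.sum_congr rfl fun j _ => hbin n j
    rw [hsum, ENNReal.toReal_sum (fun j _ => ENNReal.ofReal_ne_top)]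
    refine Finset.sum_congr rfl fun j _ => ENNReal.toReal_ofReal ?_
    have hq : (0:ℝ) ≤ 1 - p := by linarith
    positivity
  have hq : (0:ℝ) ≤ 1 - p := by linarith
  refine ⟨?_, ?_, ?_⟩
  · -- case p < pl
    intro hplt
    apply sanov_calc p pl pu hp0 hp1 _ hA pl hpl hpl1 (fun n => ⌈pl*(n:ℝ)⌉₊)
    · -- hjn
      filter_upwards [nc_ev pl pu hlu, eventually_gt_atTop 0] with n h1 hn0
      have hnR : (0:ℝ) < n := by exact_mod_cast hn0
      have hcl : (⌈pl*(n:ℝ)⌉₊ : ℝ) < pl*(n:ℝ) + 1 :=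
        Nat.ceil_lt_add_one (by positivity)
      refine ⟨?_, Nat.le_ceil _, by linarith⟩
      rw [Nat.ceil_le]
      nlinarith
    · -- hjlim
      apply ratio_tendsto
      filter_upwards [eventually_gt_atTop 0] with n hn0
      have hcl : (⌈pl*(n:ℝ)⌉₊ : ℝ) < pl*(n:ℝ) + 1 :=
        Nat.ceil_lt_add_one (by positivity)
      exact ⟨by linarith [Nat.le_ceil (pl*(n:ℝ))], by linarith⟩
    · -- hkl
      filter_upwards [eventually_gt_atTop 0] with n hn0 j hjle hj1 hj2
      have hnR : (0:ℝ) < n := by exact_mod_cast hn0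
      have hx0 : (0:ℝ) ≤ (j:ℝ)/n := by positivity
      have hx1 : (j:ℝ)/n ≤ 1 := by
        rw [div_le_one hnR]; exact_mod_cast hjle
      have hplx : pl ≤ (j:ℝ)/n := by
        rw [le_div_iff₀ hnR]; linarith [hj1]
      rw [klBer_eq_klF p hp0 hp1 hpl hpl1, klBer_eq_klF p hp0 hp1 hx0 hx1]
      exact klF_monoOn p hp0 hp1 ⟨le_of_lt hplt, hpl1⟩
        ⟨le_trans (le_of_lt hplt) hplx, hx1⟩ hplx
  · -- case pl ≤ p ≤ pu
    intro hple hpue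
    rw [← klBer_self p]
    apply sanov_calc p pl pu hp0 hp1 _ hA p (le_of_lt hp0) (le_of_lt hp1)
      (fun n => min ⌈p*(n:ℝ)⌉₊ ⌊pu*(n:ℝ)⌋₊)
    · -- hjn
      filter_upwards [nc_ev pl pu hlu, eventually_gt_atTop 0] with n h1 hn0
      have hnR : (0:ℝ) < n := by exact_mod_cast hn0
      have hfl : (⌊pu*(n:ℝ)⌋₊ : ℝ) ≤ pu*(n:ℝ) := Nat.floor_le (by positivity)
      have hfl2 : pu*(n:ℝ) - 1 < (⌊pu*(n:ℝ)⌋₊ : ℝ) := Nat.sub_one_lt_floor _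
      refine ⟨?_, ?_, ?_⟩
      · apply le_trans (min_le_right _ _)
        have hfn : (⌊pu*(n:ℝ)⌋₊ : ℝ) ≤ (n:ℝ) := by nlinarith
        exact_mod_cast hfn
      · rw [Nat.cast_min]
        apply le_min
        · exact le_trans (by nlinarith) (Nat.le_ceil _)
        · linarith
      · rw [Nat.cast_min]
        exact le_trans (min_le_right _ _) hfl
    · -- hjlim
      apply ratio_tendsto
      filter_upwards [eventually_gt_atTop 0] with n hn0
      have hnR : (0:ℝ) < n := by exact_mod_cast hn0
      have hcl : (⌈p*(n:ℝ)⌉₊ : ℝ) < p*(n:ℝ) + 1 := Nat.ceil_lt_add_one (by positivity)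
      have hfl2 : pu*(n:ℝ) - 1 < (⌊pu*(n:ℝ)⌋₊ : ℝ) := Nat.sub_one_lt_floor _
      rw [Nat.cast_min]
      constructor
      · apply le_min
        · linarith [Nat.le_ceil (p*(n:ℝ))]
        · nlinarith
      · exact le_trans (min_le_left _ _) (by linarith)
    · -- hkl
      filter_upwards [eventually_gt_atTop 0] with n hn0 j hjle hj1 hj2
      have hnR : (0:ℝ) < n := by exact_mod_cast hn0
      have hx0 : (0:ℝ) ≤ (j:ℝ)/n := by positivity
      have hx1 : (j:ℝ)/n ≤ 1 := by
        rw [div_le_one hnR]; exact_mod_cast hjle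
      rw [klBer_self, klBer_eq_klF p hp0 hp1 hx0 hx1]
      have hzero : klF p p = 0 := by
        rw [← klBer_eq_klF p hp0 hp1 (le_of_lt hp0) (le_of_lt hp1), klBer_self]
      rcases le_total ((j:ℝ)/n) p with hc | hc
      · rw [← hzero]
        exact klF_antiOn p hp0 hp1 ⟨hx0, hc⟩ ⟨le_of_lt hp0, le_refl _⟩ hc
      · rw [← hzero]
        exact klF_monoOn p hp0 hp1 ⟨le_refl _, le_of_lt hp1⟩ ⟨hc, hx1⟩ hc
  · -- case pu < p
    intro hput
    apply sanov_calc p pl pu hp0 hp1 _ hA pu hpu0 hpu (fun n => ⌊pu*(n:ℝ)⌋₊)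
    · -- hjn
      filter_upwards [nc_ev pl pu hlu, eventually_gt_atTop 0] with n h1 hn0
      have hnR : (0:ℝ) < n := by exact_mod_cast hn0
      have hfl : (⌊pu*(n:ℝ)⌋₊ : ℝ) ≤ pu*(n:ℝ) := Nat.floor_le (by positivity)
      have hfl2 : pu*(n:ℝ) - 1 < (⌊pu*(n:ℝ)⌋₊ : ℝ) := Nat.sub_one_lt_floor _
      refine ⟨?_, by linarith, hfl⟩
      have hfn : (⌊pu*(n:ℝ)⌋₊ : ℝ) ≤ (n:ℝ) := by nlinarith
      exact_mod_cast hfn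
    · -- hjlim
      apply ratio_tendsto
      filter_upwards [eventually_gt_atTop 0] with n hn0
      have hfl : (⌊pu*(n:ℝ)⌋₊ : ℝ) ≤ pu*(n:ℝ) := Nat.floor_le (by positivity)
      have hfl2 : pu*(n:ℝ) - 1 < (⌊pu*(n:ℝ)⌋₊ : ℝ) := Nat.sub_one_lt_floor _
      exact ⟨by linarith, by linarith⟩
    · -- hkl
      filter_upwards [eventually_gt_atTop 0] with n hn0 j hjle hj1 hj2
      have hnR : (0:ℝ) < n := by exact_mod_cast hn0
      have hx0 : (0:ℝ) ≤ (j:ℝ)/n := by positivity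
      have hx1 : (j:ℝ)/n ≤ 1 := by
        rw [div_le_one hnR]; exact_mod_cast hjle
      have hxpu : (j:ℝ)/n ≤ pu := by
        rw [div_le_iff₀ hnR]; nlinarith [hj2]
      rw [klBer_eq_klF p hp0 hp1 hpu0 hpu, klBer_eq_klF p hp0 hp1 hx0 hx1]
      exact klF_antiOn p hp0 hp1 ⟨hx0, le_trans hxpu (le_of_lt hput)⟩
        ⟨hpu0, le_of_lt hput⟩ hxpu
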